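/- Let α ∈ (1,2), let G be an ℝ^d-valued random vector whose norm has tail P(‖G‖ > x) = b0(x)·x^{−α} for all x > 0, where b0 : (0,∞) → (0,∞) is differentiable with lim_{x→∞} x·b0'(x)/b0(x) = 0, and assume x ↦ P(‖G‖ > x) is continuous and strictly decreasing to 0. For each n ≥ 1 let a_n > 0 be defined by n·P(‖G‖ > a_n) = 1. Then lim_{t→∞} sup_{n≥1} (n/a_n)·E[ ‖G‖·1{‖G‖ > t·a_n} ] = 0; i.e., the rescaled measures μ_n(·) = n·P(G/a_n ∈ ·) are uniformly integrable in n. -/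

import Mathlib

open MeasureTheory Filter Topology


theorem potter_aux {b0 : ℝ → ℝ} {δ X0 : ℝ} (hX0 : 0 < X0)
    (hb0pos : ∀ x : ℝ, 0 < x → 0 < b0 x)
    (hb0diff : ∀ x : ℝ, 0 < x → DifferentiableAt ℝ b0 x)
    (hbd : ∀ z : ℝ, X0 ≤ z → z * deriv b0 z / b0 z ≤ δ) :
    ∀ x y : ℝ, X0 ≤ x → x ≤ y → b0 y ≤ b0 x * (y / x) ^ δ := by
  intro x y hx hxy
  have hxpos : 0 < x := hX0.trans_le hx
  have hypos : 0 < y := hxpos.trans_le hxy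
  set h : ℝ → ℝ := fun z => Real.log (b0 z) - δ * Real.log z with hh
  have hder : ∀ z : ℝ, 0 < z → HasDerivAt h (deriv b0 z / b0 z - δ / z) z := by
    intro z hz
    have h1 : HasDerivAt b0 (deriv b0 z) z := (hb0diff z hz).hasDerivAt
    have h2 : HasDerivAt (fun w => Real.log (b0 w)) (deriv b0 z / b0 z) z := by
      have := (Real.hasDerivAt_log (hb0pos z hz).ne').comp z h1
      rw [div_eq_inv_mul]; exact this
    have h3 : HasDerivAt (fun w => δ * Real.log w) (δ / z) z := by
      simpa [div_eq_mul_inv] using (Real.hasDerivAt_log hz.ne').const_mul δ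
    exact h2.sub h3
  have hanti : AntitoneOn h (Set.Ici X0) := by
    apply antitoneOn_of_deriv_nonpos (convex_Ici X0)
    · intro z hz
      exact ((hder z (hX0.trans_le hz)).continuousAt).continuousWithinAt
    · intro z hz
      rw [interior_Ici] at hz
      exact ((hder z (hX0.trans hz)).differentiableAt).differentiableWithinAt
    · intro z hz
      rw [interior_Ici] at hz
      have hzpos : 0 < z := hX0.trans hz
      rw [(hder z hzpos).deriv]
      rw [sub_nonpos]
      rw [div_le_div_iff₀ (hb0pos z hzpos) hzpos]
      have h5 := hbd z hz.le
      rw [div_le_iff₀ (hb0pos z hzpos)] at h5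
      nlinarith [h5]
  have key : h y ≤ h x := hanti hx (hx.trans hxy) hxy
  have hby := hb0pos y hypos
  have hbx := hb0pos x hxpos
  have hlog : Real.log (b0 y) ≤ Real.log (b0 x) + δ * (Real.log y - Real.log x) := by
    simp only [hh] at key; linarith
  calc b0 y = Real.exp (Real.log (b0 y)) := (Real.exp_log hby).symm
    _ ≤ Real.exp (Real.log (b0 x) + δ * (Real.log y - Real.log x)) := Real.exp_le_exp.2 hlog
    _ = b0 x * (y / x) ^ δ := by
        rw [Real.exp_add, Real.exp_log hbx, Real.rpow_def_of_pos (div_pos hypos hxpos),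
          Real.log_div hypos.ne' hxpos.ne', mul_comm (Real.log y - Real.log x) δ]


theorem tail_integral_bound {Ω : Type*} [MeasurableSpace Ω] (P : Measure Ω)
    [IsProbabilityMeasure P] {f : Ω → ℝ} (hf : Measurable f) (hfnn : ∀ ω, 0 ≤ f ω)
    {u c γ : ℝ} (hu : 0 < u) (hγ : γ < -1) (hc : 0 ≤ c)
    (hbound : ∀ s : ℝ, u ≤ s → (P {ω | f ω > s}).toReal ≤ c * s ^ γ) :
    ∫ ω in {ω | f ω > u}, f ω ∂P ≤
      u * (P {ω | f ω > u}).toReal + c * (-u ^ (γ + 1) / (γ + 1)) := by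
  set S : Set Ω := {ω | f ω > u} with hS
  have hSm : MeasurableSet S := measurableSet_lt measurable_const hf
  set g : Ω → ℝ := S.indicator f with hg
  have hgm : Measurable g := hf.indicator hSm
  have hgnn : ∀ ω, 0 ≤ g ω := fun ω => Set.indicator_nonneg (fun ω _ => hfnn ω) ω
  have hgle : ∀ ω, g ω ≤ f ω := fun ω => Set.indicator_le_self' (fun ω _ => hfnn ω) ω
  set I : ℝ := -u ^ (γ + 1) / (γ + 1) with hI
  have hIpos : 0 ≤ I := by
    have h1 : (0:ℝ) < u ^ (γ + 1) := Real.rpow_pos_of_pos hu _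
    have h2 : γ + 1 < 0 := by linarith
    rw [hI, div_nonneg_iff]
    right; constructor <;> linarith
  -- Layer cake
  have hlc : ∫⁻ ω, ENNReal.ofReal (g ω) ∂P = ∫⁻ t in Set.Ioi (0:ℝ), P {a | t < g a} := by
    exact lintegral_eq_lintegral_meas_lt P (Eventually.of_forall hgnn) hgm.aemeasurable
  -- split the t-integral
  have hsplit : ∫⁻ t in Set.Ioi (0:ℝ), P {a | t < g a} =
      (∫⁻ t in Set.Ioc (0:ℝ) u, P {a | t < g a}) + ∫⁻ t in Set.Ioi u, P {a | t < g a} := by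
    rw [← lintegral_union measurableSet_Ioi (Set.Ioc_disjoint_Ioi le_rfl),
      Set.Ioc_union_Ioi_eq_Ioi hu.le]
  have hpart1 : (∫⁻ t in Set.Ioc (0:ℝ) u, P {a | t < g a}) ≤ P S * ENNReal.ofReal u := by
    calc (∫⁻ t in Set.Ioc (0:ℝ) u, P {a | t < g a})
        ≤ ∫⁻ _ in Set.Ioc (0:ℝ) u, P S := by
          refine setLIntegral_mono measurable_const fun t ht => ?_
          refine measure_mono fun a ha => ?_
          by_contra hna
          have : g a = 0 := Set.indicator_of_notMem hna f
          rw [Set.mem_setOf_eq, this] at ha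
          exact absurd ht.1 (not_lt.2 ha.le)
      _ = P S * ENNReal.ofReal u := by
          rw [setLIntegral_const, Real.volume_Ioc, sub_zero]
  have hpart2 : (∫⁻ t in Set.Ioi u, P {a | t < g a}) ≤ ENNReal.ofReal (c * I) := by
    have hle : ∀ t ∈ Set.Ioi u, P {a | t < g a} ≤ ENNReal.ofReal (c * t ^ γ) := by
      intro t ht
      have h1 : P {a | t < g a} ≤ P {ω | f ω > t} :=
        measure_mono fun a ha => lt_of_lt_of_le ha (hgle a)
      have h2 : P {ω | f ω > t} = ENNReal.ofReal ((P {ω | f ω > t}).toReal) :=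
        (ENNReal.ofReal_toReal (measure_ne_top P _)).symm
      calc P {a | t < g a} ≤ P {ω | f ω > t} := h1
        _ = ENNReal.ofReal ((P {ω | f ω > t}).toReal) := h2
        _ ≤ ENNReal.ofReal (c * t ^ γ) := ENNReal.ofReal_le_ofReal (hbound t (le_of_lt ht))
    calc (∫⁻ t in Set.Ioi u, P {a | t < g a})
        ≤ ∫⁻ t in Set.Ioi u, ENNReal.ofReal (c * t ^ γ) :=
          setLIntegral_mono (by fun_prop) hle
      _ = ENNReal.ofReal (∫ t in Set.Ioi u, c * t ^ γ) := by
          rw [ofReal_integral_eq_lintegral_ofReal]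
          · exact (integrableOn_Ioi_rpow_of_lt hγ hu).const_mul c
          · filter_upwards [ae_restrict_mem measurableSet_Ioi] with t ht
            exact mul_nonneg hc (Real.rpow_nonneg (le_of_lt (hu.trans ht)) γ)
      _ = ENNReal.ofReal (c * I) := by
          rw [integral_const_mul, integral_Ioi_rpow_of_lt hγ hu]
  have hfin : ∫⁻ ω, ENNReal.ofReal (g ω) ∂P < ⊤ := by
    rw [hlc, hsplit]
    refine lt_of_le_of_lt (add_le_add hpart1 hpart2) ?_
    exact ENNReal.add_lt_top.2 ⟨ENNReal.mul_lt_top (measure_lt_top P S) ENNReal.ofReal_lt_top,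
      ENNReal.ofReal_lt_top⟩
  have hgint : Integrable g P := by
    refine ⟨hgm.aestronglyMeasurable, ?_⟩
    rw [hasFiniteIntegral_iff_norm]
    simpa [Real.norm_eq_abs, abs_of_nonneg (hgnn _)] using hfin
  have heq : ∫ ω in S, f ω ∂P = (∫⁻ ω, ENNReal.ofReal (g ω) ∂P).toReal := by
    rw [← integral_indicator hSm, ← hg,
      integral_eq_lintegral_of_nonneg_ae (Eventually.of_forall hgnn) hgm.aestronglyMeasurable]
  rw [heq]
  refine ENNReal.toReal_le_of_le_ofReal ?_ ?_
  · exact add_nonneg (mul_nonneg hu.le ENNReal.toReal_nonneg) (mul_nonneg hc hIpos)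
  · rw [hlc, hsplit, ENNReal.ofReal_add (mul_nonneg hu.le ENNReal.toReal_nonneg)
      (mul_nonneg hc hIpos)]
    refine add_le_add (le_trans hpart1 ?_) hpart2
    conv_lhs => rw [← ENNReal.ofReal_toReal (measure_ne_top P S)]
    rw [ENNReal.ofReal_mul hu.le, mul_comm]

theorem shell_bound {Ω : Type*} [MeasurableSpace Ω] (P : Measure Ω)
    [IsProbabilityMeasure P] {f : Ω → ℝ} (hf : Measurable f) (hfnn : ∀ ω, 0 ≤ f ω)
    {b0 : ℝ → ℝ} (hb0pos : ∀ x : ℝ, 0 < x → 0 < b0 x)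
    {α δ X0 : ℝ} (hδ : 0 < δ) (hδα : δ < α - 1) (hX0 : 0 < X0)
    (htail : ∀ x : ℝ, 0 < x → (P {ω | f ω > x}).toReal = b0 x * x ^ (-α))
    (hpotter : ∀ x y : ℝ, X0 ≤ x → x ≤ y → b0 y ≤ b0 x * (y / x) ^ δ)
    {w u : ℝ} (hw : X0 ≤ w) (hwu : w ≤ u) :
    ∫ ω in {ω | f ω > u}, f ω ∂P ≤
      (b0 w * w ^ (-δ)) * (1 + -1 / (δ - α + 1)) * u ^ (δ - α + 1) := by
  set γ : ℝ := δ - α with hγdef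
  have hγ : γ < -1 := by rw [hγdef]; linarith
  have hwpos : 0 < w := hX0.trans_le hw
  have hupos : 0 < u := hwpos.trans_le hwu
  set c : ℝ := b0 w * w ^ (-δ) with hcdef
  have hc : 0 ≤ c := mul_nonneg (hb0pos w hwpos).le (Real.rpow_nonneg hwpos.le _)
  have hbound : ∀ s : ℝ, u ≤ s → (P {ω | f ω > s}).toReal ≤ c * s ^ γ := by
    intro s hs
    have hspos : 0 < s := hupos.trans_le hs
    rw [htail s hspos]
    have h1 : b0 s * s ^ (-α) ≤ (b0 w * (s / w) ^ δ) * s ^ (-α) :=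
      mul_le_mul_of_nonneg_right (hpotter w s hw (hwu.trans hs))
        (Real.rpow_nonneg hspos.le _)
    refine h1.trans (le_of_eq ?_)
    have e1 : s ^ γ = s ^ δ * s ^ (-α) := by
      rw [← Real.rpow_add hspos]
      congr 1
      try (rw [hγdef]; ring)
    have e2 : w ^ (-δ) = (w ^ δ)⁻¹ := Real.rpow_neg hwpos.le δ
    rw [e1, hcdef, e2, Real.div_rpow hspos.le hwpos.le]
    ring
  have hmain := tail_integral_bound P hf hfnn hupos hγ hc hbound
  calc ∫ ω in {ω | f ω > u}, f ω ∂P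
      ≤ u * (P {ω | f ω > u}).toReal + c * (-u ^ (γ + 1) / (γ + 1)) := hmain
    _ ≤ c * u ^ (γ + 1) + c * (-1 / (γ + 1) * u ^ (γ + 1)) := by
        have h4 : u * (P {ω | f ω > u}).toReal ≤ c * u ^ (γ + 1) := by
          calc u * (P {ω | f ω > u}).toReal ≤ u * (c * u ^ γ) :=
                mul_le_mul_of_nonneg_left (hbound u le_rfl) hupos.le
            _ = c * u ^ (γ + 1) := by rw [Real.rpow_add_one hupos.ne']; ring
        have h5 : c * (-u ^ (γ + 1) / (γ + 1)) = c * (-1 / (γ + 1) * u ^ (γ + 1)) := by ring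
        linarith
    _ = c * (1 + -1 / (γ + 1)) * u ^ (γ + 1) := by ring
    _ = (b0 w * w ^ (-δ)) * (1 + -1 / (δ - α + 1)) * u ^ (δ - α + 1) := by
        rw [hcdef, hγdef]


/-- with `P(‖G‖ > x) = b0(x) x^{-α}`, `b0` differentiable slowly varying,
the tail continuous and strictly decreasing to `0`, and `a_n` defined by
`n P(‖G‖ > a_n) = 1`, the rescaled measures are uniformly integrable:
`lim_{t→∞} sup_{n≥1} (n/a_n) E[‖G‖ 1{‖G‖ > t a_n}] = 0`. -/
theorem rescaled_measures_uniformly_integrable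
    {Ω : Type*} [MeasurableSpace Ω] (P : Measure Ω) [IsProbabilityMeasure P]
    {d : ℕ} (G : Ω → EuclideanSpace ℝ (Fin d)) (hG : Measurable G)
    (α : ℝ) (hα : α ∈ Set.Ioo (1:ℝ) 2)
    (b0 : ℝ → ℝ) (hb0pos : ∀ x : ℝ, 0 < x → 0 < b0 x)
    (hb0diff : ∀ x : ℝ, 0 < x → DifferentiableAt ℝ b0 x)
    (hb0slow : Tendsto (fun x : ℝ => x * deriv b0 x / b0 x) atTop (𝓝 0))
    (htail : ∀ x : ℝ, 0 < x → (P {ω | ‖G ω‖ > x}).toReal = b0 x * x ^ (-α))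
    (hcont : ContinuousOn (fun x : ℝ => (P {ω | ‖G ω‖ > x}).toReal) (Set.Ioi 0))
    (hanti : StrictAntiOn (fun x : ℝ => (P {ω | ‖G ω‖ > x}).toReal) (Set.Ioi 0))
    (hto0 : Tendsto (fun x : ℝ => (P {ω | ‖G ω‖ > x}).toReal) atTop (𝓝 0))
    (a : ℕ → ℝ) (hapos : ∀ n : ℕ, 1 ≤ n → 0 < a n)
    (ha : ∀ n : ℕ, 1 ≤ n → (n:ℝ) * (P {ω | ‖G ω‖ > a n}).toReal = 1) :
    ∀ ε : ℝ, 0 < ε → ∃ t0 : ℝ, ∀ t : ℝ, t0 ≤ t → ∀ n : ℕ, 1 ≤ n →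
      ((n:ℝ) / a n) * ∫ ω in {ω | ‖G ω‖ > t * a n}, ‖G ω‖ ∂P ≤ ε := by
  intro ε hε
  obtain ⟨hα1, hα2⟩ := hα
  have hf : Measurable (fun ω : Ω => ‖G ω‖) := hG.norm
  have hfnn : ∀ ω : Ω, 0 ≤ ‖G ω‖ := fun ω => norm_nonneg _
  set δ : ℝ := (α - 1) / 2 with hδdef
  have hδ : 0 < δ := by rw [hδdef]; linarith
  have hδα : δ < α - 1 := by rw [hδdef]; linarith
  have hγ1 : δ - α + 1 < 0 := by linarith
  -- slow variation: eventual bound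
  obtain ⟨X1, hX1⟩ := eventually_atTop.mp (hb0slow.eventually_lt_const hδ)
  set X0 : ℝ := max X1 1 with hX0def
  have hX0pos : (0:ℝ) < X0 := lt_of_lt_of_le one_pos (le_max_right _ _)
  have hpotter : ∀ x y : ℝ, X0 ≤ x → x ≤ y → b0 y ≤ b0 x * (y / x) ^ δ :=
    potter_aux hX0pos hb0pos hb0diff
      (fun z hz => (hX1 z ((le_max_left _ _).trans hz)).le)
  have hTpos : ∀ x : ℝ, 0 < x → 0 < (P {ω | ‖G ω‖ > x}).toReal := by
    intro x hx; rw [htail x hx]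
    exact mul_pos (hb0pos x hx) (Real.rpow_pos_of_pos hx _)
  have hTX0 : 0 < (P {ω | ‖G ω‖ > X0}).toReal := hTpos X0 hX0pos
  set N0 : ℕ := ⌈1 / (P {ω | ‖G ω‖ > X0}).toReal⌉₊ + 1 with hN0def
  have hN0ge1 : 1 ≤ N0 := Nat.le_add_left 1 _
  have hN0pos : (0:ℝ) < (N0:ℝ) := by positivity
  have hN0 : 1 / (N0:ℝ) < (P {ω | ‖G ω‖ > X0}).toReal := by
    have h1 : 1 / (P {ω | ‖G ω‖ > X0}).toReal < (N0:ℝ) := by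
      calc 1 / (P {ω | ‖G ω‖ > X0}).toReal ≤ (⌈1 / (P {ω | ‖G ω‖ > X0}).toReal⌉₊ : ℝ) :=
            Nat.le_ceil _
        _ < (N0:ℝ) := by rw [hN0def]; push_cast; linarith
    rw [div_lt_iff₀ hN0pos]
    rw [div_lt_iff₀ hTX0] at h1
    nlinarith
  have haX0 : ∀ n : ℕ, N0 ≤ n → X0 ≤ a n := by
    intro n hn
    by_contra hlt
    push_neg at hlt
    have hn1 : 1 ≤ n := hN0ge1.trans hn
    have hanpos := hapos n hn1
    have hkey := hanti (Set.mem_Ioi.2 hanpos) (Set.mem_Ioi.2 hX0pos) hlt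
    have hnpos : (0:ℝ) < (n:ℝ) := by exact_mod_cast hn1
    have hTa : (P {ω | ‖G ω‖ > a n}).toReal = 1 / (n:ℝ) := by
      have h := ha n hn1
      field_simp
      linarith [h]
    simp only at hkey
    rw [hTa] at hkey
    have hn' : (1:ℝ)/(n:ℝ) ≤ 1/(N0:ℝ) :=
      one_div_le_one_div_of_le hN0pos (by exact_mod_cast hn)
    linarith
  -- finite-range constants
  have hne : (Finset.Icc 1 N0).Nonempty := ⟨1, Finset.mem_Icc.2 ⟨le_rfl, hN0ge1⟩⟩
  set c0 : ℝ := (Finset.Icc 1 N0).inf' hne a with hc0def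
  have hc0pos : 0 < c0 := by
    rw [hc0def, Finset.lt_inf'_iff]
    intro m hm; exact hapos m (Finset.mem_Icc.1 hm).1
  have hc0le : ∀ n ∈ Finset.Icc 1 N0, c0 ≤ a n := fun n hn => Finset.inf'_le a hn
  set C1 : ℝ := (Finset.Icc 1 N0).sup' hne (fun m : ℕ => (m:ℝ) * a m ^ (δ - α)) with hC1def
  have hC1 : ∀ n ∈ Finset.Icc 1 N0, (n:ℝ) * a n ^ (δ - α) ≤ C1 :=
    fun n hn => Finset.le_sup' (fun m : ℕ => (m:ℝ) * a m ^ (δ - α)) hn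
  -- constants
  set K : ℝ := 1 + -1 / (δ - α + 1) with hKdef
  have hKpos : 0 < K := by
    have h : 0 < -1 / (δ - α + 1) := div_pos_of_neg_of_neg (by norm_num) hγ1
    rw [hKdef]; linarith
  set cX : ℝ := b0 X0 * X0 ^ (-δ) with hcXdef
  have hcXpos : 0 < cX :=
    mul_pos (hb0pos X0 hX0pos) (Real.rpow_pos_of_pos hX0pos _)
  set C3 : ℝ := K * max 1 (cX * C1) with hC3def
  -- choice of t0
  have htend : Tendsto (fun t : ℝ => C3 * t ^ (δ - α + 1)) atTop (𝓝 (C3 * 0)) := by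
    apply Tendsto.const_mul
    have h := tendsto_rpow_neg_atTop (show 0 < -(δ - α + 1) by linarith)
    simpa using h
  rw [mul_zero] at htend
  obtain ⟨T1, hT1⟩ := eventually_atTop.mp (htend.eventually_lt_const hε)
  refine ⟨max T1 (max 1 (X0 / c0)), ?_⟩
  intro t ht n hn
  have ht1 : (1:ℝ) ≤ t := le_trans (le_trans (le_max_left 1 _) (le_max_right T1 _)) ht
  have htpos : 0 < t := lt_of_lt_of_le one_pos ht1
  have htX : X0 / c0 ≤ t := le_trans (le_trans (le_max_right 1 _) (le_max_right T1 _)) ht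
  have hbε : C3 * t ^ (δ - α + 1) ≤ ε := (hT1 t (le_trans (le_max_left _ _) ht)).le
  have hanpos := hapos n hn
  have hupos : 0 < t * a n := mul_pos htpos hanpos
  have hnn : (0:ℝ) ≤ (n:ℝ) / a n := div_nonneg (Nat.cast_nonneg n) hanpos.le
  have htp : (0:ℝ) ≤ t ^ (δ - α + 1) := Real.rpow_nonneg htpos.le _
  by_cases hcase : X0 ≤ a n
  · -- regime a n ≥ X0 : base point w = a n
    have hwu : a n ≤ t * a n := le_mul_of_one_le_left hanpos.le ht1
    have hSB := shell_bound P hf hfnn hb0pos hδ hδα hX0pos htail hpotter hcase hwu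
    have hTa : (n:ℝ) * (b0 (a n) * a n ^ (-α)) = 1 := by
      rw [← htail (a n) hanpos]; exact ha n hn
    have e1 : a n ^ (-δ) * a n ^ (δ - α + 1) / a n = a n ^ (-α) := by
      rw [← Real.rpow_add hanpos]
      have h2 : a n ^ (-δ + (δ - α + 1)) = a n ^ (1 + -α) := by congr 1; ring
      rw [h2, Real.rpow_add hanpos, Real.rpow_one, mul_div_cancel_left₀ _ hanpos.ne']
    calc ((n:ℝ) / a n) * ∫ ω in {ω | ‖G ω‖ > t * a n}, ‖G ω‖ ∂P
        ≤ ((n:ℝ) / a n) *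
            ((b0 (a n) * a n ^ (-δ)) * (1 + -1 / (δ - α + 1)) * (t * a n) ^ (δ - α + 1)) :=
          mul_le_mul_of_nonneg_left hSB hnn
      _ = K * t ^ (δ - α + 1) *
            ((n:ℝ) * (b0 (a n) * (a n ^ (-δ) * a n ^ (δ - α + 1) / a n))) := by
          rw [Real.mul_rpow htpos.le hanpos.le, hKdef]; ring
      _ = K * t ^ (δ - α + 1) := by rw [e1, hTa]; ring
      _ ≤ C3 * t ^ (δ - α + 1) := by
          refine mul_le_mul_of_nonneg_right ?_ htp
          rw [hC3def]
          exact le_mul_of_one_le_right hKpos.le (le_max_left _ _)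
      _ ≤ ε := hbε
  · -- regime a n < X0 : base point w = X0, and n ≤ N0
    push_neg at hcase
    have hnN0 : n ≤ N0 := by
      by_contra h
      push_neg at h
      exact absurd (haX0 n h.le) (not_le.2 hcase)
    have hmem : n ∈ Finset.Icc 1 N0 := Finset.mem_Icc.2 ⟨hn, hnN0⟩
    have hwu : X0 ≤ t * a n := by
      calc X0 = (X0 / c0) * c0 := (div_mul_cancel₀ X0 hc0pos.ne').symm
        _ ≤ t * a n := mul_le_mul htX (hc0le n hmem) hc0pos.le htpos.le
    have hSB := shell_bound P hf hfnn hb0pos hδ hδα hX0pos htail hpotter le_rfl hwu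
    have e1 : a n ^ (δ - α + 1) / a n = a n ^ (δ - α) := by
      rw [Real.rpow_add_one hanpos.ne' (δ - α), mul_div_assoc, div_self hanpos.ne', mul_one]
    calc ((n:ℝ) / a n) * ∫ ω in {ω | ‖G ω‖ > t * a n}, ‖G ω‖ ∂P
        ≤ ((n:ℝ) / a n) *
            ((b0 X0 * X0 ^ (-δ)) * (1 + -1 / (δ - α + 1)) * (t * a n) ^ (δ - α + 1)) :=
          mul_le_mul_of_nonneg_left hSB hnn
      _ = cX * K * t ^ (δ - α + 1) * ((n:ℝ) * (a n ^ (δ - α + 1) / a n)) := by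
          rw [Real.mul_rpow htpos.le hanpos.le, hKdef, hcXdef]; ring
      _ = cX * K * t ^ (δ - α + 1) * ((n:ℝ) * a n ^ (δ - α)) := by rw [e1]
      _ ≤ cX * K * t ^ (δ - α + 1) * C1 := by
          refine mul_le_mul_of_nonneg_left (hC1 n hmem) ?_
          positivity
      _ = K * (cX * C1) * t ^ (δ - α + 1) := by ring
      _ ≤ C3 * t ^ (δ - α + 1) := by
          refine mul_le_mul_of_nonneg_right ?_ htp
          rw [hC3def]
          exact mul_le_mul_of_nonneg_left (le_max_right _ _) hKpos.le
      _ ≤ ε := hbε
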